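/- Let s ∈ (0,1), let Ω ⊆ ℝ^n be an open set and let u : ℝ^n → ℝ be measurable. Then F(u,Ω) = ∫_{−∞}^{∞} P_s({u > t}, Ω) dt, where F(u,Ω) := (1/2) ∫∫_{ℝ^{2n} ∖ (Ω^c × Ω^c)} |u(x)−u(y)| · |x−y|^{−(n+s)} dx dy (both sides valued in [0,∞]). In particular, (1/2)[u]_{W^{s,1}(Ω)} = ∫_{−∞}^{∞} P_s^L({u > t}, Ω) dt, where [u]_{W^{s,1}(Ω)} := ∫_Ω ∫_Ω |u(x)−u(y)| · |x−y|^{−(n+s)} dx dy. -/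
import Mathlib


open MeasureTheory Set Filter Topology Metric Bornology
open scoped ENNReal NNReal symmDiff

noncomputable def Ls (n : ℕ) (s : ℝ) (A B : Set (EuclideanSpace ℝ (Fin n))) : ℝ≥0∞ :=
  ∫⁻ x in A, ∫⁻ y in B, ENNReal.ofReal (dist x y ^ (-((n : ℝ) + s)))

noncomputable def Ps (n : ℕ) (s : ℝ) (E Ω : Set (EuclideanSpace ℝ (Fin n))) : ℝ≥0∞ :=
  Ls n s (E ∩ Ω) (Eᶜ ∩ Ω) + Ls n s (E ∩ Ω) (Eᶜ \ Ω) + Ls n s (E \ Ω) (Eᶜ ∩ Ω)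

def SMinimal (n : ℕ) (s : ℝ) (E Ω : Set (EuclideanSpace ℝ (Fin n))) : Prop :=
  Ps n s E Ω < ⊤ ∧ ∀ F : Set (EuclideanSpace ℝ (Fin n)), MeasurableSet F →
    volume ((F \ Ω) ∆ (E \ Ω)) = 0 → Ps n s E Ω ≤ Ps n s F Ω

noncomputable def kern (n : ℕ) (s : ℝ)
    (p : EuclideanSpace ℝ (Fin n) × EuclideanSpace ℝ (Fin n)) : ℝ≥0∞ :=
  ENNReal.ofReal (dist p.1 p.2 ^ (-((n : ℝ) + s)))

lemma kern_meas (n : ℕ) (s : ℝ) : Measurable (kern n s) :=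
  ENNReal.measurable_ofReal.comp ((measurable_fst.dist measurable_snd).pow measurable_const)

lemma kern_swap (n : ℕ) (s : ℝ) (p : EuclideanSpace ℝ (Fin n) × EuclideanSpace ℝ (Fin n)) :
    kern n s p.swap = kern n s p := by
  simp [kern, dist_comm]

lemma lintegral_rect (n : ℕ) (s : ℝ) (A B : Set (EuclideanSpace ℝ (Fin n))) :
    ∫⁻ p in A ×ˢ B, kern n s p = Ls n s A B := by
  have h : (volume : Measure (EuclideanSpace ℝ (Fin n) × EuclideanSpace ℝ (Fin n))).restrict (A ×ˢ B)
      = ((volume : Measure (EuclideanSpace ℝ (Fin n))).restrict A).prod (volume.restrict B) :=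
    (Measure.prod_restrict A B).symm
  rw [h, lintegral_prod _ (kern_meas n s).aemeasurable]
  rfl

lemma Ls_symm (n : ℕ) (s : ℝ) (A B : Set (EuclideanSpace ℝ (Fin n))) :
    Ls n s A B = Ls n s B A := by
  unfold Ls
  rw [lintegral_lintegral_swap (f := fun x y => ENNReal.ofReal (dist x y ^ (-((n : ℝ) + s))))
    ((kern_meas n s).aemeasurable)]
  exact lintegral_congr fun y => lintegral_congr fun x => by rw [dist_comm]

lemma layer (a b : ℝ) :
    ∫⁻ t : ℝ, (if (b ≤ t ∧ t < a) ∨ (a ≤ t ∧ t < b) then (1:ℝ≥0∞) else 0)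
      = ENNReal.ofReal |a - b| := by
  have h : ∀ t : ℝ, (if (b ≤ t ∧ t < a) ∨ (a ≤ t ∧ t < b) then (1:ℝ≥0∞) else 0)
      = (Set.Ico b a ∪ Set.Ico a b).indicator (fun _ => (1:ℝ≥0∞)) t := by
    intro t
    simp [Set.indicator_apply, Set.mem_Ico, and_comm]
  simp_rw [h]
  rw [lintegral_indicator (measurableSet_Ico.union measurableSet_Ico)]
  simp only [lintegral_one, Measure.restrict_apply, Set.univ_inter, MeasurableSet.univ]
  rcases le_total a b with hab | hab
  · rw [Set.Ico_eq_empty (not_lt.2 hab), Set.empty_union, Real.volume_Ico,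
      abs_sub_comm, abs_of_nonneg (sub_nonneg.2 hab)]
  · rw [Set.Ico_eq_empty (not_lt.2 hab), Set.union_empty, Real.volume_Ico,
      abs_of_nonneg (sub_nonneg.2 hab)]

lemma main_swap (n : ℕ) (s : ℝ) (u : EuclideanSpace ℝ (Fin n) → ℝ) (hu : Measurable u)
    (S : Set (EuclideanSpace ℝ (Fin n) × EuclideanSpace ℝ (Fin n))) (hS : MeasurableSet S)
    (hsym : ∀ p : EuclideanSpace ℝ (Fin n) × EuclideanSpace ℝ (Fin n), p ∈ S → p.swap ∈ S) :
    2⁻¹ * ∫⁻ p in S, ENNReal.ofReal (|u p.1 - u p.2| * dist p.1 p.2 ^ (-((n : ℝ) + s)))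
      = ∫⁻ t : ℝ, ∫⁻ p in S ∩ ({x | t < u x} ×ˢ {x | t < u x}ᶜ), kern n s p := by
  classical
  have m1 : Measurable fun q : (EuclideanSpace ℝ (Fin n) × EuclideanSpace ℝ (Fin n)) × ℝ =>
      u q.1.1 := hu.comp (measurable_fst.comp measurable_fst)
  have m2 : Measurable fun q : (EuclideanSpace ℝ (Fin n) × EuclideanSpace ℝ (Fin n)) × ℝ =>
      u q.1.2 := hu.comp (measurable_snd.comp measurable_fst)
  have hset : MeasurableSet {q : (EuclideanSpace ℝ (Fin n) × EuclideanSpace ℝ (Fin n)) × ℝ |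
      (u q.1.2 ≤ q.2 ∧ q.2 < u q.1.1) ∨ (u q.1.1 ≤ q.2 ∧ q.2 < u q.1.2)} :=
    ((measurableSet_le m2 measurable_snd).inter (measurableSet_lt measurable_snd m1)).union
      ((measurableSet_le m1 measurable_snd).inter (measurableSet_lt measurable_snd m2))
  have key : ∀ p : EuclideanSpace ℝ (Fin n) × EuclideanSpace ℝ (Fin n),
      ENNReal.ofReal (|u p.1 - u p.2| * dist p.1 p.2 ^ (-((n : ℝ) + s)))
        = ∫⁻ t : ℝ, (if (u p.2 ≤ t ∧ t < u p.1) ∨ (u p.1 ≤ t ∧ t < u p.2) then (1:ℝ≥0∞) else 0)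
            * kern n s p := by
    intro p
    have h1 : ENNReal.ofReal (|u p.1 - u p.2| * dist p.1 p.2 ^ (-((n : ℝ) + s)))
        = ENNReal.ofReal |u p.1 - u p.2| * kern n s p := ENNReal.ofReal_mul (abs_nonneg _)
    rw [h1, ← layer (u p.1) (u p.2),
      ← lintegral_mul_const' (kern n s p) _ (by simp [kern])]
  calc 2⁻¹ * ∫⁻ p in S, ENNReal.ofReal (|u p.1 - u p.2| * dist p.1 p.2 ^ (-((n : ℝ) + s)))
      = 2⁻¹ * ∫⁻ p in S, ∫⁻ t : ℝ,
          (if (u p.2 ≤ t ∧ t < u p.1) ∨ (u p.1 ≤ t ∧ t < u p.2) then (1:ℝ≥0∞) else 0)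
            * kern n s p := by
        rw [lintegral_congr key]
    _ = 2⁻¹ * ∫⁻ t : ℝ, ∫⁻ p in S,
          (if (u p.2 ≤ t ∧ t < u p.1) ∨ (u p.1 ≤ t ∧ t < u p.2) then (1:ℝ≥0∞) else 0)
            * kern n s p := by
        rw [lintegral_lintegral_swap (f := fun p t =>
          (if (u p.2 ≤ t ∧ t < u p.1) ∨ (u p.1 ≤ t ∧ t < u p.2) then (1:ℝ≥0∞) else 0)
            * kern n s p)
          (((Measurable.ite hset measurable_const measurable_const).mul
            ((kern_meas n s).comp measurable_fst)).aemeasurable)]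
    _ = ∫⁻ t : ℝ, ∫⁻ p in S ∩ ({x | t < u x} ×ˢ {x | t < u x}ᶜ), kern n s p := by
        have ht : ∀ t : ℝ, (∫⁻ p in S,
            (if (u p.2 ≤ t ∧ t < u p.1) ∨ (u p.1 ≤ t ∧ t < u p.2) then (1:ℝ≥0∞) else 0)
              * kern n s p)
            = 2 * ∫⁻ p in S ∩ ({x | t < u x} ×ˢ {x | t < u x}ᶜ), kern n s p := by
          intro t
          set E : Set (EuclideanSpace ℝ (Fin n)) := {x | t < u x} with hE
          have hEm : MeasurableSet E := measurableSet_lt measurable_const hu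
          have hind : ∀ p : EuclideanSpace ℝ (Fin n) × EuclideanSpace ℝ (Fin n),
              (if (u p.2 ≤ t ∧ t < u p.1) ∨ (u p.1 ≤ t ∧ t < u p.2) then (1:ℝ≥0∞) else 0)
                * kern n s p
              = ((E ×ˢ Eᶜ) ∪ (Eᶜ ×ˢ E)).indicator (kern n s) p := by
            intro p
            rw [Set.indicator_apply]
            by_cases h1 : t < u p.1 <;> by_cases h2 : t < u p.2 <;>
              simp [Set.mem_prod, hE, h1, h2, not_lt, le_of_lt, h1, not_lt.1]
          simp_rw [hind]
          rw [lintegral_indicator ((hEm.prod hEm.compl).union (hEm.compl.prod hEm)),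
            Measure.restrict_restrict ((hEm.prod hEm.compl).union (hEm.compl.prod hEm))]
          have hsplit : ((E ×ˢ Eᶜ) ∪ (Eᶜ ×ˢ E)) ∩ S
              = (S ∩ (E ×ˢ Eᶜ)) ∪ (S ∩ (Eᶜ ×ˢ E)) := by
            rw [Set.union_inter_distrib_right, Set.inter_comm _ S, Set.inter_comm _ S]
          rw [hsplit, lintegral_union (hS.inter (hEm.compl.prod hEm))
            (by
              rw [Set.disjoint_left]
              rintro p ⟨-, h1, -⟩ ⟨-, h2, -⟩
              exact h2 h1)]
          have hswap : (∫⁻ p in S ∩ (Eᶜ ×ˢ E), kern n s p)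
              = ∫⁻ p in S ∩ (E ×ˢ Eᶜ), kern n s p := by
            have hmp : MeasurePreserving
                (Prod.swap : (EuclideanSpace ℝ (Fin n) × EuclideanSpace ℝ (Fin n)) → _)
                volume volume := Measure.measurePreserving_swap
            have hpre : (Prod.swap : _ → EuclideanSpace ℝ (Fin n) × EuclideanSpace ℝ (Fin n))
                ⁻¹' (S ∩ (Eᶜ ×ˢ E)) = S ∩ (E ×ˢ Eᶜ) := by
              ext p
              simp only [Set.mem_preimage, Set.mem_inter_iff, Set.mem_prod, Prod.fst_swap,
                Prod.snd_swap]
              constructor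
              · rintro ⟨h1, h2, h3⟩
                exact ⟨by simpa using hsym _ h1, h3, h2⟩
              · rintro ⟨h1, h2, h3⟩
                exact ⟨hsym _ h1, h3, h2⟩
            have h := hmp.setLIntegral_comp_preimage (hS.inter (hEm.compl.prod hEm))
              (kern_meas n s)
            rw [hpre] at h
            rw [← h]
            exact lintegral_congr fun p => kern_swap n s p
          rw [hswap, two_mul]
        simp_rw [ht]
        rw [lintegral_const_mul' 2 _ ENNReal.ofNat_ne_top, ← mul_assoc,
          ENNReal.inv_mul_cancel two_ne_zero ENNReal.ofNat_ne_top, one_mul]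

/-- The functional `F(u,Ω)`: half of the `Ω`-contribution to the `W^{s,1}`-seminorm of `u`. -/
noncomputable def Fc (n : ℕ) (s : ℝ) (u : EuclideanSpace ℝ (Fin n) → ℝ)
    (Ω : Set (EuclideanSpace ℝ (Fin n))) : ℝ≥0∞ :=
  2⁻¹ * ∫⁻ p in ((Set.univ \ (Ωᶜ ×ˢ Ωᶜ)) :
      Set (EuclideanSpace ℝ (Fin n) × EuclideanSpace ℝ (Fin n))),
    ENNReal.ofReal (|u p.1 - u p.2| * dist p.1 p.2 ^ (-((n : ℝ) + s)))

/-- Proposition 3.1, generalized coarea formula: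
`F(u,Ω) = ∫_ℝ Pₛ({u > t}, Ω) dt`, and in particular half of the `W^{s,1}(Ω)`-seminorm of `u`
equals the integral over `t` of the local parts `Pₛ^L({u > t}, Ω)`. -/
theorem generalized_coarea_formula
    (n : ℕ) (hn : 1 ≤ n) (s : ℝ) (hs : s ∈ Set.Ioo (0 : ℝ) 1)
    (Ω : Set (EuclideanSpace ℝ (Fin n))) (hΩ : IsOpen Ω)
    (u : EuclideanSpace ℝ (Fin n) → ℝ) (hu : Measurable u) :
    Fc n s u Ω = ∫⁻ t : ℝ, Ps n s {x | t < u x} Ω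
    ∧ 2⁻¹ * (∫⁻ x in Ω, ∫⁻ y in Ω,
          ENNReal.ofReal (|u x - u y| * dist x y ^ (-((n : ℝ) + s))))
        = ∫⁻ t : ℝ, Ls n s ({x | t < u x} ∩ Ω) ({x | t < u x}ᶜ ∩ Ω) := by
  have hΩm : MeasurableSet Ω := hΩ.measurableSet
  have hEm : ∀ t : ℝ, MeasurableSet {x | t < u x} := fun t =>
    measurableSet_lt measurable_const hu
  constructor
  · rw [Fc, main_swap n s u hu _
      (MeasurableSet.univ.diff (hΩm.compl.prod hΩm.compl))
      (by
        rintro p ⟨-, hp⟩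
        refine ⟨Set.mem_univ _, fun h => hp ?_⟩
        exact ⟨h.2, h.1⟩)]
    refine lintegral_congr fun t => ?_
    set E : Set (EuclideanSpace ℝ (Fin n)) := {x | t < u x} with hE
    have hdec : (Set.univ \ (Ωᶜ ×ˢ Ωᶜ)) ∩ (E ×ˢ Eᶜ)
        = (((E ∩ Ω) ×ˢ (Eᶜ ∩ Ω)) ∪ ((E ∩ Ω) ×ˢ (Eᶜ \ Ω))) ∪ ((E \ Ω) ×ˢ (Eᶜ ∩ Ω)) := by
      ext p
      simp only [Set.mem_inter_iff, Set.mem_diff, Set.mem_prod, Set.mem_union,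
        Set.mem_univ, true_and, Set.mem_compl_iff, not_and]
      tauto
    rw [hdec, lintegral_union (((hEm t).diff hΩm).prod ((hEm t).compl.inter hΩm))
        (by
          rw [Set.disjoint_left]
          rintro p (⟨⟨-, h1⟩, -⟩ | ⟨⟨-, h1⟩, -⟩) ⟨⟨-, h2⟩, -⟩ <;> exact h2 h1),
      lintegral_union (((hEm t).inter hΩm).prod ((hEm t).compl.diff hΩm))
        (by
          rw [Set.disjoint_left]
          rintro p ⟨-, -, h1⟩ ⟨-, -, h2⟩
          exact h2 h1),
      lintegral_rect, lintegral_rect, lintegral_rect]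
    rfl
  · have hFm : Measurable fun p : EuclideanSpace ℝ (Fin n) × EuclideanSpace ℝ (Fin n) =>
        ENNReal.ofReal (|u p.1 - u p.2| * dist p.1 p.2 ^ (-((n : ℝ) + s))) :=
      ENNReal.measurable_ofReal.comp
        ((((hu.comp measurable_fst).sub (hu.comp measurable_snd)).abs).mul
          ((measurable_fst.dist measurable_snd).pow measurable_const))
    have hprod : (∫⁻ x in Ω, ∫⁻ y in Ω,
          ENNReal.ofReal (|u x - u y| * dist x y ^ (-((n : ℝ) + s))))
        = ∫⁻ p in (Ω ×ˢ Ω : Set (EuclideanSpace ℝ (Fin n) × EuclideanSpace ℝ (Fin n))),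
            ENNReal.ofReal (|u p.1 - u p.2| * dist p.1 p.2 ^ (-((n : ℝ) + s))) := by
      rw [show (volume : Measure (EuclideanSpace ℝ (Fin n) ×
            EuclideanSpace ℝ (Fin n))).restrict (Ω ×ˢ Ω)
          = ((volume : Measure (EuclideanSpace ℝ (Fin n))).restrict Ω).prod (volume.restrict Ω)
          from (Measure.prod_restrict Ω Ω).symm,
        lintegral_prod _ hFm.aemeasurable]
    rw [hprod, main_swap n s u hu _ (hΩm.prod hΩm)
      (by rintro p ⟨h1, h2⟩; exact ⟨h2, h1⟩)]
    refine lintegral_congr fun t => ?_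
    have hdec : (Ω ×ˢ Ω) ∩ ({x | t < u x} ×ˢ {x | t < u x}ᶜ)
        = ({x | t < u x} ∩ Ω) ×ˢ ({x | t < u x}ᶜ ∩ Ω) := by
      ext p
      simp only [Set.mem_inter_iff, Set.mem_prod, Set.mem_compl_iff, Set.mem_setOf_eq]
      tauto
    rw [hdec, lintegral_rect]
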